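/- The ideal of n-minors of the (n+1)×n matrix Φ with entries Φ_{i,j} = x_{j−1} if i = j, Φ_{i,j} = −x_j if i = j+1, and 0 otherwise (indices 1 ≤ i ≤ n+1, 1 ≤ j ≤ n), equals the ideal (x_1⋯x_n, x_0 x_2⋯x_n, …, x_0⋯x_{n−1}) generated by the squarefree monomials of degree n in x_0, …, x_n. -/

import Mathlib

open MvPolynomial Finset

/-- The ideal of `n`-minors (maximal minors, obtained by deleting one row) of
the `(n+1) × n` bidiagonal Hilbert–Burch matrix of the standard Cremona map,
with entries `x_j` at position `(j, j)` and `-x_{j+1}` at position `(j+1, j)`,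
equals the ideal generated by the squarefree monomials of degree `n` in
`x_0, …, x_n`. -/
theorem standard_cremona_maximal_minors
    (k : Type*) [Field k] (n : ℕ) (hn : 1 ≤ n)
    (Φ : Matrix (Fin (n + 1)) (Fin n) (MvPolynomial (Fin (n + 1)) k))
    (hΦ : ∀ (i : Fin (n + 1)) (j : Fin n),
      Φ i j = if i = j.castSucc then X j.castSucc
        else if i = j.succ then -X j.succ else 0) :
    Ideal.span {p : MvPolynomial (Fin (n + 1)) k |
        ∃ i : Fin (n + 1), p = (Φ.submatrix i.succAbove id).det}
      = Ideal.span {p : MvPolynomial (Fin (n + 1)) k |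
          ∃ i : Fin (n + 1), p = ∏ j ∈ Finset.univ \ {i}, X j} := by
  classical
  have key : ∀ i : Fin (n + 1), ∃ u : MvPolynomial (Fin (n + 1)) k,
      u * u = 1 ∧ (Φ.submatrix i.succAbove id).det
        = u * ∏ j ∈ Finset.univ \ {i}, X j := by
    intro i
    have hi : (i : ℕ) ≤ n := Nat.lt_succ_iff.mp i.isLt
    -- the involution reversing the first `i` indices
    set f : Fin n → Fin n := fun r =>
      if h : (r : ℕ) < (i : ℕ) then ⟨(i : ℕ) - 1 - (r : ℕ), by omega⟩ else r with hfdef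
    have hfv : ∀ a : Fin n,
        ((f a : Fin n) : ℕ) = if (a : ℕ) < (i : ℕ) then (i : ℕ) - 1 - (a : ℕ) else (a : ℕ) := by
      intro a
      by_cases h : (a : ℕ) < (i : ℕ) <;> simp [hfdef, h]
    have hinv : Function.Involutive f := by
      intro a
      apply Fin.ext
      rw [hfv, hfv]
      by_cases h : (a : ℕ) < (i : ℕ) <;> simp [h] <;> split <;> omega
    set σ : Equiv.Perm (Fin n) := hinv.toPerm f with hσ
    have hσc : ⇑σ = f := rfl
    -- value of succAbove
    have hsA : ∀ r : Fin n,
        ((i.succAbove r : Fin (n + 1)) : ℕ)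
          = if (r : ℕ) < (i : ℕ) then (r : ℕ) else (r : ℕ) + 1 := by
      intro r
      by_cases h : (r : ℕ) < (i : ℕ)
      · rw [Fin.succAbove_of_castSucc_lt _ _ (by simpa [Fin.lt_def] using h)]
        simp [h]
      · rw [Fin.succAbove_of_le_castSucc _ _ (by simpa [Fin.le_def] using not_lt.mp h)]
        simp [h]
    -- block triangularity of the permuted matrix
    have htri : ((Φ.submatrix i.succAbove id).submatrix σ σ).BlockTriangular id := by
      intro a b hab
      have hab' : (b : ℕ) < (a : ℕ) := hab
      simp only [Matrix.submatrix_apply, id_eq, hσc, hΦ]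
      rw [if_neg, if_neg]
      · intro hc
        have hc' := congrArg Fin.val hc
        rw [hsA, Fin.val_succ] at hc'
        have h1 := hfv a; have h2 := hfv b
        by_cases ha : (a : ℕ) < (i : ℕ) <;> by_cases hb : (b : ℕ) < (i : ℕ) <;>
          simp only [ha, hb, if_true, if_false, if_pos, if_neg, not_false_iff] at h1 h2 <;>
          rw [h1, h2] at hc' <;> split at hc' <;> omega
      · intro hc
        have hc' := congrArg Fin.val hc
        rw [hsA, Fin.coe_castSucc] at hc'
        have h1 := hfv a; have h2 := hfv b
        by_cases ha : (a : ℕ) < (i : ℕ) <;> by_cases hb : (b : ℕ) < (i : ℕ) <;>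
          simp only [ha, hb, if_true, if_false, if_pos, if_neg, not_false_iff] at h1 h2 <;>
          rw [h1, h2] at hc' <;> split at hc' <;> omega
    -- the diagonal entries
    have hMrr : ∀ r : Fin n, (Φ.submatrix i.succAbove id) r r
        = (if (r : ℕ) < (i : ℕ) then (1 : MvPolynomial (Fin (n + 1)) k) else -1)
            * X (i.succAbove r) := by
      intro r
      by_cases h : (r : ℕ) < (i : ℕ)
      · have hs : i.succAbove r = r.castSucc :=
          Fin.succAbove_of_castSucc_lt _ _ (by simpa [Fin.lt_def] using h)
        simp [Matrix.submatrix_apply, hs, hΦ, h]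
      · have hs : i.succAbove r = r.succ :=
          Fin.succAbove_of_le_castSucc _ _ (by simpa [Fin.le_def] using not_lt.mp h)
        have hne : r.succ ≠ r.castSucc := (Fin.castSucc_lt_succ (i := r)).ne'
        simp [Matrix.submatrix_apply, hs, hΦ, hne, h]
    -- compute the determinant
    have hdet : (Φ.submatrix i.succAbove id).det
        = ∏ r : Fin n, (Φ.submatrix i.succAbove id) r r := by
      rw [← Matrix.det_submatrix_equiv_self σ, Matrix.det_of_upperTriangular htri]
      exact Equiv.prod_comp σ fun r => (Φ.submatrix i.succAbove id) r r
    refine ⟨∏ r : Fin n, (if (r : ℕ) < (i : ℕ) then (1 : MvPolynomial (Fin (n + 1)) k) else -1),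
      ?_, ?_⟩
    · rw [← Finset.prod_mul_distrib]
      apply Finset.prod_eq_one
      intro r _
      split <;> ring
    · have hprod : ∏ j ∈ Finset.univ \ {i}, (X j : MvPolynomial (Fin (n + 1)) k)
          = ∏ r : Fin n, X (i.succAbove r) := by
        apply mul_left_cancel₀ (X_ne_zero i)
        rw [← Finset.prod_eq_mul_prod_sdiff_singleton_of_mem (Finset.mem_univ i) (fun j => (X j : MvPolynomial (Fin (n + 1)) k))]
        exact Fin.prod_univ_succAbove (fun j => (X j : MvPolynomial (Fin (n + 1)) k)) i
      rw [hdet, hprod, ← Finset.prod_mul_distrib]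
      exact Finset.prod_congr rfl fun r _ => hMrr r
  apply le_antisymm <;> rw [Ideal.span_le] <;> rintro p ⟨i, rfl⟩
  · obtain ⟨u, hu1, hu2⟩ := key i
    rw [hu2]
    exact Ideal.mul_mem_left _ _ (Ideal.subset_span ⟨i, rfl⟩)
  · obtain ⟨u, hu1, hu2⟩ := key i
    have : (∏ j ∈ Finset.univ \ {i}, (X j : MvPolynomial (Fin (n + 1)) k))
        = u * (Φ.submatrix i.succAbove id).det := by
      rw [hu2, ← mul_assoc, hu1, one_mul]
    rw [this]
    exact Ideal.mul_mem_left _ _ (Ideal.subset_span ⟨i, rfl⟩)
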